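/- For finitely many finite groups G₁, …, G_m of pairwise coprime orders, ssd(G₁ × ⋯ × G_m) = ssd(G₁)·ssd(G₂)·⋯·ssd(G_m). -/

import Mathlib

section Aux

variable {m : ℕ} {G : Fin m → Type*} [∀ i, Group (G i)]

theorem map_eval_pi (K : ∀ i, Subgroup (G i)) (i : Fin m) :
    (Subgroup.pi Set.univ K).map (Pi.evalMonoidHom G i) = K i := by
  ext x
  constructor
  · rintro ⟨y, hy, rfl⟩
    exact (Subgroup.mem_pi _).mp hy i (Set.mem_univ i)
  · intro hx
    refine ⟨Pi.mulSingle i x, (Subgroup.mulSingle_mem_pi i x).mpr (fun _ => hx), ?_⟩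
    simp [Pi.evalMonoidHom]

theorem pi_map_eval [∀ i, Finite (G i)]
    (h : ∀ i j, i ≠ j → Nat.Coprime (Nat.card (G i)) (Nat.card (G j)))
    (H : Subgroup (∀ i, G i)) :
    Subgroup.pi Set.univ (fun i => H.map (Pi.evalMonoidHom G i)) = H := by
  apply le_antisymm
  · intro x hx
    rw [Subgroup.mem_pi] at hx
    have key : ∀ i, Pi.mulSingle i (x i) ∈ H := by
      intro i
      obtain ⟨y, hy, hyx⟩ := hx i (Set.mem_univ i)
      set c := Nat.card (G i) with hc
      set n := ∏ j ∈ Finset.univ.erase i, Nat.card (G j) with hn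
      have hcop : Nat.Coprime n c := by
        apply Nat.Coprime.prod_left
        intro j hj
        exact (h j i (Finset.ne_of_mem_erase hj))
      set e := n ^ Nat.totient c with he
      have hmod : e ≡ 1 [MOD c] := Nat.ModEq.pow_totient hcop
      have hpow : y ^ e = Pi.mulSingle i (x i) := by
        funext j
        rcases eq_or_ne j i with rfl | hj
        · have hdvd : orderOf (y j) ∣ c := by
            rw [hc]; exact orderOf_dvd_natCard (y j)
          calc (y ^ e) j = (y j) ^ e := by simp [Pi.pow_apply]
            _ = (y j) ^ 1 := by
                rw [pow_eq_pow_iff_modEq]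
                exact hmod.of_dvd hdvd
            _ = x j := by rw [pow_one]; exact hyx
            _ = Pi.mulSingle j (x j) j := by simp
        · have hdvd : orderOf (y j) ∣ e := by
            have h1 : orderOf (y j) ∣ Nat.card (G j) := orderOf_dvd_natCard (y j)
            have h2 : Nat.card (G j) ∣ n := Finset.dvd_prod_of_mem _ (Finset.mem_erase.mpr ⟨hj, Finset.mem_univ j⟩)
            have h3 : n ∣ e := dvd_pow_self n (Nat.totient_pos.mpr Nat.card_pos).ne'
            exact h1.trans (h2.trans h3)
          calc (y ^ e) j = (y j) ^ e := by simp [Pi.pow_apply]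
            _ = 1 := orderOf_dvd_iff_pow_eq_one.mp hdvd
            _ = Pi.mulSingle i (x i) j := by simp [Pi.mulSingle_eq_of_ne hj]
      rw [← hpow]
      exact H.pow_mem hy e
    have := H.noncommProd_mem (t := Finset.univ)
      (f := fun i => Pi.mulSingle i (x i))
      (fun i _ j _ _ => Pi.mulSingle_apply_commute x i j)
      (fun i _ => key i)
    rwa [Finset.noncommProd_mulSingle] at this
  · intro x hx
    rw [Subgroup.mem_pi]
    exact fun i _ => ⟨x, hx, rfl⟩

/-- The lattice equivalence. -/
noncomputable def subgroupPiEquiv [∀ i, Finite (G i)]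
    (h : ∀ i j, i ≠ j → Nat.Coprime (Nat.card (G i)) (Nat.card (G j))) :
    Subgroup (∀ i, G i) ≃ ∀ i, Subgroup (G i) where
  toFun H := fun i => H.map (Pi.evalMonoidHom G i)
  invFun K := Subgroup.pi Set.univ K
  left_inv H := pi_map_eval h H
  right_inv K := funext fun i => map_eval_pi K i

open scoped commutatorElement

theorem commutator_bot_iff [∀ i, Finite (G i)]
    (h : ∀ i j, i ≠ j → Nat.Coprime (Nat.card (G i)) (Nat.card (G j)))
    (H K : Subgroup (∀ i, G i)) :
    ⁅H, K⁆ = ⊥ ↔ ∀ i, ⁅H.map (Pi.evalMonoidHom G i), K.map (Pi.evalMonoidHom G i)⁆ = ⊥ := by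
  constructor
  · intro hb i
    rw [← Subgroup.map_commutator, hb]
    exact Subgroup.map_bot _
  · intro hb
    rw [eq_bot_iff, Subgroup.commutator_le]
    intro g hg k hk
    have : ∀ i, ⁅g i, k i⁆ = 1 := by
      intro i
      have := hb i
      rw [eq_bot_iff, Subgroup.commutator_le] at this
      exact this (g i) ⟨g, hg, rfl⟩ (k i) ⟨k, hk, rfl⟩
    have : ⁅g, k⁆ = 1 := by
      funext i
      simpa [commutatorElement_def] using this i
    simp [this, Subgroup.one_mem]

end Aux

noncomputable def ssd (G : Type*) [Group G] : ℝ :=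
  (Nat.card {p : Subgroup G × Subgroup G // ⁅p.1, p.2⁆ = ⊥} : ℝ) /
    (Nat.card (Subgroup G) : ℝ) ^ 2

theorem ssd_pi_of_pairwise_coprime (m : ℕ) (G : Fin m → Type*)
    [∀ i, Group (G i)] [∀ i, Finite (G i)]
    (h : ∀ i j, i ≠ j → Nat.Coprime (Nat.card (G i)) (Nat.card (G j))) :
    ssd (∀ i, G i) = ∏ i, ssd (G i) := by
  classical
  let e := subgroupPiEquiv h
  have hcard1 : Nat.card (Subgroup (∀ i, G i)) = ∏ i, Nat.card (Subgroup (G i)) := by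
    rw [Nat.card_eq_of_bijective e e.bijective, Nat.card_pi]
  have E : {p : Subgroup (∀ i, G i) × Subgroup (∀ i, G i) // ⁅p.1, p.2⁆ = ⊥} ≃
      ∀ i, {q : Subgroup (G i) × Subgroup (G i) // ⁅q.1, q.2⁆ = ⊥} :=
    { toFun := fun p i => ⟨(e p.1.1 i, e p.1.2 i), by
        exact (commutator_bot_iff h p.1.1 p.1.2).mp p.2 i⟩
      invFun := fun q => ⟨(e.symm (fun i => (q i).1.1), e.symm (fun i => (q i).1.2)), by
        rw [commutator_bot_iff h]
        intro i
        have h1 : Subgroup.map (Pi.evalMonoidHom G i) (e.symm (fun i => (q i).1.1)) = (q i).1.1 := by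
          exact congrFun (e.apply_symm_apply (fun i => (q i).1.1)) i
        have h2 : Subgroup.map (Pi.evalMonoidHom G i) (e.symm (fun i => (q i).1.2)) = (q i).1.2 := by
          exact congrFun (e.apply_symm_apply (fun i => (q i).1.2)) i
        rw [h1, h2]
        exact (q i).2⟩
      left_inv := fun p => by
        ext <;> simp [e.symm_apply_apply]
      right_inv := fun q => by
        funext i
        ext <;> simp [e.apply_symm_apply] }
  have hcard2 : Nat.card {p : Subgroup (∀ i, G i) × Subgroup (∀ i, G i) // ⁅p.1, p.2⁆ = ⊥}
      = ∏ i, Nat.card {q : Subgroup (G i) × Subgroup (G i) // ⁅q.1, q.2⁆ = ⊥} := by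
    rw [Nat.card_eq_of_bijective E E.bijective, Nat.card_pi]
  unfold ssd
  rw [hcard1, hcard2]
  push_cast
  rw [Finset.prod_div_distrib, ← Finset.prod_pow]
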